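/- If E(e) ≡_BA 0 (the loop body is strictly productive) and ⟦g⟧ = ⟦e⟧ ⋄ ⟦g⟧ +_{⟦b⟧} ⟦f⟧, then ⟦g⟧ = ⟦e^(b)⟧ ⋄ ⟦f⟧; i.e., the fixpoint rule is sound in the language model. -/

import Mathlib

/-- A guarded string over actions `S` and atoms `A`: an initial atom followed by a
list of (action, atom) pairs, representing `α₀p₁α₁⋯pₙαₙ`. -/
abbrev GS (S A : Type*) := A × List (S × A)

variable {S A : Type*}

/-- The last atom of a guarded string. -/
def lastAtom (x : GS S A) : A := ((x.2.map Prod.snd).getLast?).getD x.1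

/-- Fusion product of languages of guarded strings:
`(xα) ⋄ (βy) = xαy` when `α = β`, undefined otherwise. -/
def fprod (L K : Set (GS S A)) : Set (GS S A) :=
  {z | ∃ x ∈ L, ∃ y ∈ K, lastAtom x = y.1 ∧ z = (x.1, x.2 ++ y.2)}

/-- A set of atoms viewed as the language of single-atom guarded strings. -/
def atomsL (B : Set A) : Set (GS S A) := {x | x.1 ∈ B ∧ x.2 = []}

/-- Powers of a language with respect to the fusion product: `L⁰ = At`, `L^{n+1} = Lⁿ ⋄ L`. -/
def fpow (L : Set (GS S A)) : ℕ → Set (GS S A)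
  | 0 => atomsL Set.univ
  | n + 1 => fprod (fpow L n) L

/-- Guarded union: `L +_B K = (B ⋄ L) ∪ (B̄ ⋄ K)`. -/
def gunion (L K : Set (GS S A)) (B : Set A) : Set (GS S A) :=
  fprod (atomsL B) L ∪ fprod (atomsL Bᶜ) K

/-- Guarded iteration: `L^(B) = ⋃_{n≥0} (B ⋄ L)ⁿ ⋄ B̄`. -/
def gloop (L : Set (GS S A)) (B : Set A) : Set (GS S A) :=
  ⋃ n : ℕ, fprod (fpow (fprod (atomsL B) L) n) (atomsL Bᶜ)

/-- Boolean expressions over primitive tests `T`. -/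
inductive BExp (T : Type*) where
  | zero : BExp T
  | one : BExp T
  | tst (t : T) : BExp T
  | and (b c : BExp T) : BExp T
  | or (b c : BExp T) : BExp T
  | not (b : BExp T) : BExp T

/-- An atom: a complete truth assignment over the primitive tests. -/
abbrev Atom (T : Type*) := T → Bool

/-- Evaluation of a Boolean expression at an atom. -/
def BExp.eval {T : Type*} (α : Atom T) : BExp T → Bool
  | .zero => false
  | .one => true
  | .tst t => α t
  | .and b c => b.eval α && c.eval α
  | .or b c => b.eval α || c.eval α
  | .not b => !(b.eval α)

/-- The set of atoms satisfying a Boolean expression. -/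
def bsem {T : Type*} (b : BExp T) : Set (Atom T) := {α | b.eval α = true}

/-- GKAT expressions over actions `S` and primitive tests `T`. -/
inductive Exp (S T : Type*) where
  | act (p : S) : Exp S T
  | bexp (b : BExp T) : Exp S T
  | seq (e f : Exp S T) : Exp S T
  | ite (b : BExp T) (e f : Exp S T) : Exp S T
  | whle (b : BExp T) (e : Exp S T) : Exp S T

/-- Language semantics of GKAT expressions. -/
def sem {S T : Type*} : Exp S T → Set (GS S (Atom T))
  | .act p => {x | ∃ α β, x = (α, [(p, β)])}
  | .bexp b => atomsL (bsem b)
  | .seq e f => fprod (sem e) (sem f)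
  | .ite b e f => gunion (sem e) (sem f) (bsem b)
  | .whle b e => gloop (sem e) (bsem b)

/-- The sequence of atoms of a guarded string. -/
def atomsOf {S A : Type*} (x : GS S A) : List A := x.1 :: x.2.map Prod.snd

/-- The sequence of actions of a guarded string. -/
def actionsOf {S A : Type*} (x : GS S A) : List S := x.2.map Prod.fst

/-- The determinacy property: strings agreeing on their first `n` atoms agree
on their first `n` actions (or lack thereof). -/
def Deterministic {S A : Type*} (L : Set (GS S A)) : Prop :=
  ∀ x ∈ L, ∀ y ∈ L, ∀ n : ℕ,
    (atomsOf x).take n = (atomsOf y).take n →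
    (actionsOf x).take n = (actionsOf y).take n

/-- The termination test `E(e)` of a GKAT expression. -/
def Ef {S T : Type*} : Exp S T → BExp T
  | .act _ => .zero
  | .bexp b => b
  | .seq e f => .and (Ef e) (Ef f)
  | .ite b e f => .or (.and b (Ef e)) (.and (.not b) (Ef f))
  | .whle b _ => .not b

section Aux
variable {S A : Type*}

lemma lastAtom_fuse {x y : GS S A} (h : lastAtom x = y.1) :
    lastAtom ((x.1, x.2 ++ y.2) : GS S A) = lastAtom y := by
  unfold lastAtom at *
  rcases eq_or_ne y.2 [] with hv | hv
  · simp [hv, ← h]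
  · have hm : (y.2.map Prod.snd) ≠ [] := by simpa using hv
    simp only [List.map_append]
    rw [List.getLast?_append_of_ne_nil _ hm]
    rcases hq : (y.2.map Prod.snd).getLast? with _ | a
    · exact absurd (List.getLast?_eq_none_iff.mp hq) hm
    · rfl

lemma mem_fprod {L K : Set (GS S A)} {x y : GS S A} (hx : x ∈ L) (hy : y ∈ K)
    (h : lastAtom x = y.1) : ((x.1, x.2 ++ y.2) : GS S A) ∈ fprod L K :=
  ⟨x, hx, y, hy, h, rfl⟩

lemma fprod_assoc (L K M : Set (GS S A)) : fprod (fprod L K) M = fprod L (fprod K M) := by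
  ext z
  constructor
  · rintro ⟨_, ⟨x, hx, y, hy, hxy, rfl⟩, w, hw, hyw, rfl⟩
    have h2 : lastAtom y = w.1 := by rw [← lastAtom_fuse hxy]; exact hyw
    exact ⟨x, hx, (y.1, y.2 ++ w.2), ⟨y, hy, w, hw, h2, rfl⟩, hxy, by simp⟩
  · rintro ⟨x, hx, _, ⟨y, hy, w, hw, hyw, rfl⟩, hxy, rfl⟩
    have hxy' : lastAtom x = y.1 := hxy
    exact ⟨(x.1, x.2 ++ y.2), ⟨x, hx, y, hy, hxy', rfl⟩, w, hw,
      by rw [lastAtom_fuse hxy']; exact hyw, by simp⟩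

lemma fprod_univ_left (L : Set (GS S A)) : fprod (atomsL Set.univ) L = L := by
  ext z
  constructor
  · rintro ⟨x, ⟨-, hx2⟩, y, hy, hxy, rfl⟩
    have h1 : x.1 = y.1 := by simpa [lastAtom, hx2] using hxy
    simpa [hx2, h1] using hy
  · intro hz
    exact ⟨(z.1, []), ⟨trivial, rfl⟩, z, hz, by simp [lastAtom], by simp⟩

lemma fprod_univ_right (L : Set (GS S A)) : fprod L (atomsL Set.univ) = L := by
  ext z
  constructor
  · rintro ⟨x, hx, y, ⟨-, hy2⟩, hxy, rfl⟩
    simpa [hy2] using hx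
  · intro hz
    exact ⟨z, hz, (lastAtom z, []), ⟨trivial, rfl⟩, rfl, by simp⟩

lemma fpow_succ' (L : Set (GS S A)) (n : ℕ) :
    fpow L (n + 1) = fprod L (fpow L n) := by
  induction n with
  | zero => show fprod (fpow L 0) L = _
            rw [show fpow L 0 = (atomsL Set.univ : Set (GS S A)) from rfl,
              fprod_univ_left, fprod_univ_right]
  | succ n ih =>
    conv_lhs => rw [show fpow L (n + 1 + 1) = fprod (fpow L (n + 1)) L from rfl,
      ih, fprod_assoc]
    conv_rhs => rw [show fpow L (n + 1) = fprod (fpow L n) L from rfl]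

lemma fprod_mono_right {L K K' : Set (GS S A)} (h : K ⊆ K') :
    fprod L K ⊆ fprod L K' := by
  rintro z ⟨x, hx, y, hy, hxy, rfl⟩
  exact ⟨x, hx, y, h hy, hxy, rfl⟩

lemma eval_of_nil {S T : Type*} (e : Exp S T) :
    ∀ x ∈ sem e, x.2 = [] → (Ef e).eval x.1 = true := by
  induction e with
  | act p => rintro x ⟨α, β, rfl⟩ h; simp at h
  | bexp c => rintro x ⟨h1, h2⟩ -; exact h1
  | seq e₁ f₁ ihe ihf =>
    rintro x ⟨u, hu, v, hv, huv, rfl⟩ h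
    obtain ⟨hu2, hv2⟩ := List.append_eq_nil_iff.mp h
    have h1 := ihe u hu hu2
    have hv1 : u.1 = v.1 := by simpa [lastAtom, hu2] using huv
    have h2 : BExp.eval u.1 (Ef f₁) = true := by rw [hv1]; exact ihf v hv hv2
    simp [Ef, BExp.eval, h1, h2]
  | ite c e₁ f₁ ihe ihf =>
    rintro x (⟨a, ⟨ha, ha2⟩, y, hy, hay, rfl⟩ | ⟨a, ⟨ha, ha2⟩, y, hy, hay, rfl⟩) h
    all_goals
      obtain ⟨-, hy2⟩ := List.append_eq_nil_iff.mp h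
      have hay1 : a.1 = y.1 := by simpa [lastAtom, ha2] using hay
    · have h1 := ihe y hy hy2
      simp [Ef, BExp.eval, hay1 ▸ h1]
      left
      exact ha
    · have h1 := ihf y hy hy2
      have hb : c.eval a.1 = false := by
        by_contra hcon
        exact ha (by simpa [bsem] using (Bool.not_eq_false _).mp hcon)
      simp [Ef, BExp.eval, hay1 ▸ h1, hb]
  | whle c e₁ ih =>
    rintro x hx h
    obtain ⟨Ln, ⟨n, rfl⟩, p, hp, q, ⟨hq, hq2⟩, hpq, rfl⟩ := hx
    obtain ⟨hp2, -⟩ := List.append_eq_nil_iff.mp h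
    have hpq1 : p.1 = q.1 := by simpa [lastAtom, hp2] using hpq
    have hb : c.eval p.1 = false := by
      by_contra hcon
      exact (hpq1 ▸ hq) (by simpa [bsem] using (Bool.not_eq_false _).mp hcon)
    simp [Ef, BExp.eval, hb]

end Aux

theorem fixpoint_sound {S T : Type*} [Fintype S] [Fintype T] [Nonempty S] [Nonempty T]
    (e f g : Exp S T) (b : BExp T)
    (hE : ∀ α : Atom T, (Ef e).eval α = false)
    (hg : sem g = gunion (fprod (sem e) (sem g)) (sem f) (bsem b)) :
    sem g = fprod (gloop (sem e) (bsem b)) (sem f) := by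
  set B : Set (Atom T) := bsem b with hB
  set BE : Set (GS S (Atom T)) := fprod (atomsL B) (sem e) with hBE
  have hne : ∀ x ∈ sem e, x.2 ≠ [] := by
    intro x hx h
    have h1 := eval_of_nil e x hx h
    rw [hE x.1] at h1
    exact Bool.false_ne_true h1
  -- ⊇ direction
  have sup : ∀ n : ℕ,
      fprod (fprod (fpow BE n) (atomsL Bᶜ)) (sem f) ⊆ sem g := by
    intro n
    induction n with
    | zero =>
      rw [show fpow BE 0 = (atomsL Set.univ : Set (GS S (Atom T))) from rfl,
        fprod_univ_left, hg]
      exact Set.subset_union_right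
    | succ n ih =>
      rw [fpow_succ', fprod_assoc BE, fprod_assoc BE]
      calc fprod BE (fprod (fprod (fpow BE n) (atomsL Bᶜ)) (sem f))
          ⊆ fprod BE (sem g) := fprod_mono_right ih
        _ = fprod (atomsL B) (fprod (sem e) (sem g)) := by rw [hBE, fprod_assoc]
        _ ⊆ sem g := by intro z hz; rw [hg]; exact Set.mem_union_left _ hz
  -- ⊆ direction
  have sub : ∀ m : ℕ, ∀ x : GS S (Atom T), x.2.length = m → x ∈ sem g →
      x ∈ fprod (gloop (sem e) B) (sem f) := by
    intro m
    induction m using Nat.strong_induction_on with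
    | _ m ih =>
      intro x hlen hx
      rw [hg] at hx
      rcases hx with ⟨a, ⟨haB, ha2⟩, w, ⟨u, hu, v, hv, huv, rfl⟩, haw, rfl⟩ |
        ⟨a, ⟨haB, ha2⟩, y, hy, hay, rfl⟩
      · -- loop case
        have hau : a.1 = u.1 := by simpa [lastAtom, ha2] using haw
        have hu2 : u.2 ≠ [] := hne u hu
        have hupos : 0 < u.2.length := List.length_pos_iff.mpr hu2
        have hvlt : v.2.length < m := by
          rw [← hlen]; simp [ha2]; omega
        obtain ⟨ℓ, hℓ, y, hy, hℓy, hveq⟩ := ih v.2.length hvlt v rfl hv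
        obtain ⟨Ln, ⟨n, rfl⟩, p, hp, c, hc, hpc, hℓeq⟩ := hℓ
        have hv1 : v.1 = ℓ.1 := by rw [hveq]
        have hℓ1 : ℓ.1 = p.1 := by rw [hℓeq]
        have hulp : lastAtom u = p.1 := by rw [huv, hv1, hℓ1]
        have huB : u ∈ BE := by
          have := mem_fprod (L := atomsL B) (K := sem e)
            (x := (u.1, [])) (y := u) ⟨hau ▸ haB, rfl⟩ hu (by simp [lastAtom])
          simpa using this
        have step1 : ((u.1, u.2 ++ p.2) : GS S (Atom T)) ∈ fpow BE (n + 1) := by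
          rw [fpow_succ']
          exact mem_fprod huB hp hulp
        have step2 : ((u.1, (u.2 ++ p.2) ++ c.2) : GS S (Atom T)) ∈
            fprod (fpow BE (n + 1)) (atomsL Bᶜ) := by
          refine mem_fprod step1 hc ?_
          rw [lastAtom_fuse (x := u) (y := p) hulp]
          exact hpc
        have hℓ'g : ((u.1, u.2 ++ ℓ.2) : GS S (Atom T)) ∈ gloop (sem e) B := by
          apply Set.mem_iUnion.mpr ⟨n + 1, ?_⟩
          have : (u.2 ++ ℓ.2 : List (S × Atom T)) = (u.2 ++ p.2) ++ c.2 := by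
            rw [hℓeq, List.append_assoc]
          rw [this]
          exact step2
        have hlast : lastAtom ((u.1, u.2 ++ ℓ.2) : GS S (Atom T)) = y.1 := by
          rw [show ℓ.2 = ((ℓ.1, ℓ.2) : GS S (Atom T)).2 from rfl,
            lastAtom_fuse (x := u) (y := (ℓ.1, ℓ.2)) (by rw [hulp, hℓ1])]
          simpa [lastAtom] using hℓy
        have := mem_fprod hℓ'g hy hlast
        simpa [ha2, hau, hveq, List.append_assoc] using this
      · -- exit case
        have hay1 : a.1 = y.1 := by simpa [lastAtom, ha2] using hay
        have hloop : ((a.1, []) : GS S (Atom T)) ∈ gloop (sem e) B := by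
          apply Set.mem_iUnion.mpr ⟨0, ?_⟩
          have := mem_fprod (L := (atomsL Set.univ : Set (GS S (Atom T))))
            (K := atomsL Bᶜ) (x := (a.1, [])) (y := (a.1, []))
            ⟨trivial, rfl⟩ ⟨haB, rfl⟩ (by simp [lastAtom])
          exact this
        have := mem_fprod hloop hy (by simpa [lastAtom] using hay1)
        simpa [ha2] using this
  ext x
  constructor
  · intro hx
    exact sub x.2.length x rfl hx
  · rintro ⟨ℓ, hℓ, y, hy, hℓy, rfl⟩
    obtain ⟨Ln, ⟨n, rfl⟩, hℓn⟩ := hℓ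
    exact sup n (mem_fprod hℓn hy hℓy)
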